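/- Suppose 0 < α ≤ 1, 0 ≤ M ≤ N, and q < q₁ := −n + √(n² + α·m²). Then the constant function u*(x) = (√((n+m)/2), 0, √((n−m)/2)) is a global minimizer of ∫_Ω H_TF, and every global minimizer equals u* almost everywhere on Ω. -/

import Mathlib

open MeasureTheory

noncomputable section

abbrev E3 := EuclideanSpace ℝ (Fin 3)

/-- The sign `s`: `1` if `α ≥ 0`, `-1` otherwise. -/
def sgn' (α : ℝ) : ℝ := if 0 ≤ α then 1 else -1

/-- Thomas–Fermi energy density; coordinates: `v 0 = u₁`, `v 1 = u₀`, `v 2 = u₋₁`. -/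
def HTF (α q : ℝ) (v : Fin 3 → ℝ) : ℝ :=
  (1/2) * (v 0 ^ 2 + v 1 ^ 2 + v 2 ^ 2) ^ 2
    + (α/2) * (2 * v 1 ^ 2 * (v 0 - sgn' α * v 2) ^ 2 + (v 0 ^ 2 - v 2 ^ 2) ^ 2)
    + q * (v 0 ^ 2 + v 2 ^ 2)

/-- Admissibility: `u ∈ L⁴(Ω; ℝ³)`, nonnegative components a.e. on `Ω`,
with prescribed total mass `N` and total magnetization `M`. -/
structure Admissible (Ω : Set E3) (N M : ℝ) (u : E3 → Fin 3 → ℝ) : Prop where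
  memL4 : MemLp u 4 (volume.restrict Ω)
  nonneg : ∀ᵐ x ∂(volume.restrict Ω), ∀ i, 0 ≤ u x i
  mass : ∫ x in Ω, (u x 0 ^ 2 + u x 1 ^ 2 + u x 2 ^ 2) = N
  mag : ∫ x in Ω, (u x 0 ^ 2 - u x 2 ^ 2) = M

/-- `u` is a global minimizer of `∫_Ω H_TF` among admissible functions. -/
def IsMinimizer (Ω : Set E3) (α q N M : ℝ) (u : E3 → Fin 3 → ℝ) : Prop :=
  Admissible Ω N M u ∧
    ∀ v : E3 → Fin 3 → ℝ, Admissible Ω N M v →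
      ∫ x in Ω, HTF α q (u x) ≤ ∫ x in Ω, HTF α q (v x)


set_option maxHeartbeats 1000000 in
/-- Key algebraic inequality. -/
lemma keyK (α q n m b x y : ℝ) (hα : 0 < α) (hn : 0 < n) (hm : 0 ≤ m)
    (hq : q + n < Real.sqrt (n ^ 2 + α * m ^ 2)) (hb : 0 ≤ b) :
    0 ≤ (1/2) * (b + (x ^ 2 + y ^ 2) / 2 - n) ^ 2 + (α/2) * (x * y - m) ^ 2
        + b * (α * x ^ 2 - q) ∧
      ((1/2) * (b + (x ^ 2 + y ^ 2) / 2 - n) ^ 2 + (α/2) * (x * y - m) ^ 2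
        + b * (α * x ^ 2 - q) = 0 →
        b = 0 ∧ x ^ 2 + y ^ 2 = 2 * n ∧ x * y = m) := by
  have hr2 : (Real.sqrt (n ^ 2 + α * m ^ 2)) ^ 2 = n ^ 2 + α * m ^ 2 :=
    Real.sq_sqrt (by positivity)
  have hmain : 0 < q → q ^ 2 + 2 * q * n < α * m ^ 2 := by
    intro hq0
    have h1 : (q + n) ^ 2 < (Real.sqrt (n ^ 2 + α * m ^ 2)) ^ 2 := by
      apply pow_lt_pow_left₀ hq (by linarith)
      norm_num
    nlinarith [h1, hr2]
  rcases le_or_gt q (α * x ^ 2) with hd | hd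
  · -- all three terms nonnegative
    have t1 : 0 ≤ (1/2) * (b + (x ^ 2 + y ^ 2) / 2 - n) ^ 2 := by positivity
    have t2 : 0 ≤ (α/2) * (x * y - m) ^ 2 := by positivity
    have t3 : 0 ≤ b * (α * x ^ 2 - q) := mul_nonneg hb (by linarith)
    refine ⟨by linarith, fun hK => ?_⟩
    have s1 : 0 ≤ (b + (x ^ 2 + y ^ 2) / 2 - n) ^ 2 := sq_nonneg _
    have s2 : 0 ≤ (x * y - m) ^ 2 := sq_nonneg _
    have f1 : (1/2) * (b + (x ^ 2 + y ^ 2) / 2 - n) ^ 2 = 0 := by linarith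
    have f2 : (α/2) * (x * y - m) ^ 2 = 0 := by nlinarith
    have e3 : b * (α * x ^ 2 - q) = 0 := by linarith
    have e1 : (b + (x ^ 2 + y ^ 2) / 2 - n) ^ 2 = 0 := by linarith
    have e2 : (x * y - m) ^ 2 = 0 := by
      rcases mul_eq_zero.mp f2 with h | h
      · exfalso; rw [div_eq_zero_iff] at h; rcases h with h | h <;> linarith
      · exact h
    have e1' : b + (x ^ 2 + y ^ 2) / 2 - n = 0 := sq_eq_zero_iff.mp e1
    have e2' : x * y = m := by
      have := sq_eq_zero_iff.mp e2; linarith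
    rcases mul_eq_zero.mp e3 with hb0 | hxq
    · exact ⟨hb0, by linarith, e2'⟩
    · -- α x² = q, b possibly positive
      rcases eq_or_lt_of_le hb with hb0 | hbpos
      · refine ⟨hb0.symm, by rw [← hb0] at e1'; linarith, e2'⟩
      · exfalso
        have hxq' : α * x ^ 2 = q := by linarith
        have hq0 : 0 ≤ q := by
          have : 0 ≤ α * x ^ 2 := mul_nonneg hα.le (sq_nonneg x); linarith
        rcases eq_or_lt_of_le hq0 with hq0' | hq0'
        · -- q = 0 : then x = 0, m = 0, contradiction with hq
          have hx0 : x = 0 := by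
            have hz : α * x ^ 2 = 0 := by rw [hxq', ← hq0']
            rcases mul_eq_zero.mp hz with h | h
            · exact absurd h (by linarith)
            · exact sq_eq_zero_iff.mp h
          have hm0 : m = 0 := by rw [← e2', hx0]; ring
          rw [hm0] at hq
          simp only [mul_zero, ne_eq, OfNat.ofNat_ne_zero, not_false_eq_true,
            zero_pow, add_zero] at hq
          rw [Real.sqrt_sq hn.le] at hq
          linarith
        · have hc := hmain hq0'
          have hm2 : m ^ 2 = x ^ 2 * y ^ 2 := by rw [← e2']; ring
          have hqy : α * m ^ 2 = q * y ^ 2 := by rw [hm2, ← hxq']; ring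
          have h5 : 0 < q * y ^ 2 - q ^ 2 - 2 * q * n := by linarith
          have h6 : q + 2 * n < y ^ 2 := by
            by_contra hcon
            push_neg at hcon
            nlinarith [mul_nonneg hq0'.le (sub_nonneg.mpr hcon)]
          linarith [sq_nonneg x]
  · -- δ = q - αx² > 0, strict positivity
    have hq0 : 0 < q := by nlinarith [sq_nonneg x, hα.le]
    have hc := hmain hq0
    have hid : 4 * q ^ 2 * ((1/2) * (b + (x ^ 2 + y ^ 2) / 2 - n) ^ 2
          + (α/2) * (x * y - m) ^ 2 + b * (α * x ^ 2 - q))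
        = 2 * q ^ 2 * (b + (x ^ 2 + y ^ 2) / 2 - n + (α * x ^ 2 - q)) ^ 2
          + 2 * q * (q * y - α * m * x) ^ 2
          + 4 * q * (q - α * x ^ 2)
            * (α * m ^ 2 / 2 + q * (1 + α) * x ^ 2 / 2 - q * n - q ^ 2 / 2) := by
      ring
    have hbr : 0 < α * m ^ 2 / 2 + q * (1 + α) * x ^ 2 / 2 - q * n - q ^ 2 / 2 := by
      nlinarith [mul_nonneg (mul_nonneg hq0.le (by linarith : (0:ℝ) ≤ 1 + α)) (sq_nonneg x)]
    have hpos : 0 < (1/2) * (b + (x ^ 2 + y ^ 2) / 2 - n) ^ 2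
        + (α/2) * (x * y - m) ^ 2 + b * (α * x ^ 2 - q) := by
      nlinarith [sq_nonneg (b + (x ^ 2 + y ^ 2) / 2 - n + (α * x ^ 2 - q)),
        sq_nonneg (q * y - α * m * x), mul_pos (mul_pos hq0 (by linarith : (0:ℝ) < q - α * x ^ 2)) hbr,
        sq_nonneg q, hq0]
    exact ⟨hpos.le, fun hK => absurd hK (by linarith)⟩

lemma pointwise_key (α q n m : ℝ) (hα : 0 < α) (hn : 0 < n) (hm : 0 ≤ m)
    (hq : q + n < Real.sqrt (n ^ 2 + α * m ^ 2)) (v : Fin 3 → ℝ)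
    (hv0 : 0 ≤ v 0) (hv1 : 0 ≤ v 1) (hv2 : 0 ≤ v 2) :
    0 ≤ HTF α q v + (n ^ 2 / 2 + α * m ^ 2 / 2)
        - (n + q) * (v 0 ^ 2 + v 1 ^ 2 + v 2 ^ 2) - α * m * (v 0 ^ 2 - v 2 ^ 2) ∧
      (HTF α q v + (n ^ 2 / 2 + α * m ^ 2 / 2)
        - (n + q) * (v 0 ^ 2 + v 1 ^ 2 + v 2 ^ 2) - α * m * (v 0 ^ 2 - v 2 ^ 2) = 0 →
        v 0 = Real.sqrt ((n + m) / 2) ∧ v 1 = 0 ∧ v 2 = Real.sqrt ((n - m) / 2)) := by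
  have hident : HTF α q v + (n ^ 2 / 2 + α * m ^ 2 / 2)
        - (n + q) * (v 0 ^ 2 + v 1 ^ 2 + v 2 ^ 2) - α * m * (v 0 ^ 2 - v 2 ^ 2)
      = (1/2) * (v 1 ^ 2 + ((v 0 - v 2) ^ 2 + (v 0 + v 2) ^ 2) / 2 - n) ^ 2
        + (α/2) * ((v 0 - v 2) * (v 0 + v 2) - m) ^ 2
        + v 1 ^ 2 * (α * (v 0 - v 2) ^ 2 - q) := by
    simp only [HTF, sgn', if_pos hα.le]; ring
  obtain ⟨hK0, hKeq⟩ := keyK α q n m (v 1 ^ 2) (v 0 - v 2) (v 0 + v 2) hα hn hm hq (sq_nonneg _)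
  constructor
  · rw [hident]; exact hK0
  · intro h
    obtain ⟨hb, hs, hxy⟩ := hKeq (by rw [← hident]; exact h)
    have hv1 : v 1 = 0 := sq_eq_zero_iff.mp hb
    have h02 : v 0 ^ 2 + v 2 ^ 2 = n := by linear_combination hs / 2
    have h02' : v 0 ^ 2 - v 2 ^ 2 = m := by linear_combination hxy
    have hv0' : v 0 ^ 2 = (n + m) / 2 := by linarith
    have hv2' : v 2 ^ 2 = (n - m) / 2 := by linarith
    refine ⟨?_, hv1, ?_⟩
    · rw [← hv0', Real.sqrt_sq hv0]
    · rw [← hv2', Real.sqrt_sq hv2]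

lemma integrable_comp4 {μ : Measure E3} [IsFiniteMeasure μ] {u : E3 → Fin 3 → ℝ}
    (hu : MemLp u 4 μ) (P : (Fin 3 → ℝ) → ℝ) (hP : Continuous P)
    (C : ℝ) (hC : ∀ v : Fin 3 → ℝ, |P v| ≤ C * (1 + ‖v‖ ^ 4)) :
    Integrable (fun x => P (u x)) μ := by
  have hnorm : Integrable (fun x => ‖u x‖ ^ (4:ℕ)) μ := by
    have h := hu.integrable_norm_rpow (by norm_num) (by norm_num)
    convert h using 1
    funext x
    rw [show (ENNReal.toReal 4) = ((4:ℕ):ℝ) by norm_num, Real.rpow_natCast]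
  have hmaj : Integrable (fun x => C * (1 + ‖u x‖ ^ 4)) μ :=
    ((integrable_const (1:ℝ)).add hnorm).const_mul C
  refine hmaj.mono' (hP.comp_aestronglyMeasurable hu.aestronglyMeasurable) ?_
  filter_upwards with x
  rw [Real.norm_eq_abs]
  exact hC (u x)

lemma norm_sq_bound (v : Fin 3 → ℝ) (i : Fin 3) : v i ^ 2 ≤ ‖v‖ ^ 2 := by
  have h : |v i| ≤ ‖v‖ := by
    have := norm_le_pi_norm v i
    rwa [Real.norm_eq_abs] at this
  calc v i ^ 2 = |v i| ^ 2 := (sq_abs _).symm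
    _ ≤ ‖v‖ ^ 2 := pow_le_pow_left₀ (abs_nonneg _) h 2

lemma abs_rho_le (v : Fin 3 → ℝ) : |v 0 ^ 2 + v 1 ^ 2 + v 2 ^ 2| ≤ 3 * (1 + ‖v‖ ^ 4) := by
  have h0 := norm_sq_bound v 0
  have h1 := norm_sq_bound v 1
  have h2 := norm_sq_bound v 2
  have hw : 0 ≤ ‖v‖ := norm_nonneg v
  rw [abs_le]
  constructor <;> nlinarith [sq_nonneg (‖v‖ ^ 2 - 1), sq_nonneg (v 0), sq_nonneg (v 1), sq_nonneg (v 2)]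

lemma abs_eta_le (v : Fin 3 → ℝ) : |v 0 ^ 2 - v 2 ^ 2| ≤ 2 * (1 + ‖v‖ ^ 4) := by
  have h0 := norm_sq_bound v 0
  have h2 := norm_sq_bound v 2
  rw [abs_le]
  constructor <;> nlinarith [sq_nonneg (‖v‖ ^ 2 - 1), sq_nonneg (v 0), sq_nonneg (v 2)]

set_option maxHeartbeats 1600000 in
lemma abs_HTF_le (α q : ℝ) (hα0 : 0 ≤ α) (hα1 : α ≤ 1) (v : Fin 3 → ℝ) :
    |HTF α q v| ≤ (12 + 2 * |q|) * (1 + ‖v‖ ^ 4) := by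
  have h0 := norm_sq_bound v 0
  have h1 := norm_sq_bound v 1
  have h2 := norm_sq_bound v 2
  have hw : 0 ≤ ‖v‖ := norm_nonneg v
  set w := ‖v‖ with hwdef
  have hS1 : v 0 ^ 2 + v 1 ^ 2 + v 2 ^ 2 ≤ 3 * w ^ 2 := by linarith
  have hS0 : 0 ≤ v 0 ^ 2 + v 1 ^ 2 + v 2 ^ 2 := by positivity
  have hS : (v 0 ^ 2 + v 1 ^ 2 + v 2 ^ 2) ^ 2 ≤ 9 * w ^ 4 := by nlinarith
  have hX : (v 0 - v 2) ^ 2 ≤ 4 * w ^ 2 := by nlinarith [sq_nonneg (v 0 + v 2)]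
  have hB : v 1 ^ 2 * (v 0 - v 2) ^ 2 ≤ 4 * w ^ 4 := by nlinarith [sq_nonneg (v 0 - v 2), sq_nonneg (v 1), sq_nonneg w]
  have hD : (v 0 ^ 2 - v 2 ^ 2) ^ 2 ≤ 4 * w ^ 4 := by
    nlinarith [mul_nonneg (sq_nonneg (v 0)) (sq_nonneg (v 2)), sq_nonneg (v 0 ^ 2 + v 2 ^ 2)]
  have hI0 : 0 ≤ 2 * v 1 ^ 2 * (v 0 - v 2) ^ 2 + (v 0 ^ 2 - v 2 ^ 2) ^ 2 := by positivity
  have hIα : α * (2 * v 1 ^ 2 * (v 0 - v 2) ^ 2 + (v 0 ^ 2 - v 2 ^ 2) ^ 2) ≤ 12 * w ^ 4 := by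
    nlinarith
  have hq1 : q * (v 0 ^ 2 + v 2 ^ 2) ≤ |q| * (1 + w ^ 4) := by
    have h3 : q * (v 0 ^ 2 + v 2 ^ 2) ≤ |q| * (v 0 ^ 2 + v 2 ^ 2) :=
      mul_le_mul_of_nonneg_right (le_abs_self q) (by positivity)
    have h4 : |q| * (v 0 ^ 2 + v 2 ^ 2) ≤ |q| * (1 + w ^ 4) := by
      apply mul_le_mul_of_nonneg_left _ (abs_nonneg q)
      nlinarith [sq_nonneg (w ^ 2 - 1)]
    linarith
  have hq2 : -(|q| * (1 + w ^ 4)) ≤ q * (v 0 ^ 2 + v 2 ^ 2) := by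
    have h3 : -|q| * (v 0 ^ 2 + v 2 ^ 2) ≤ q * (v 0 ^ 2 + v 2 ^ 2) :=
      mul_le_mul_of_nonneg_right (neg_abs_le q) (by positivity)
    have h4 : |q| * (v 0 ^ 2 + v 2 ^ 2) ≤ |q| * (1 + w ^ 4) := by
      apply mul_le_mul_of_nonneg_left _ (abs_nonneg q)
      nlinarith [sq_nonneg (w ^ 2 - 1)]
    nlinarith
  have hs : sgn' α = 1 := if_pos hα0
  rw [abs_le]
  constructor <;> simp only [HTF, hs, one_mul] <;> nlinarith [abs_nonneg q, sq_nonneg w, sq_nonneg (w ^ 2)]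

/-- Antiferromagnetic case `q < q₁`: the unique minimizer is the `2C` pure state. -/
theorem antiferro_2C
    (Ω : Set E3) (hΩm : MeasurableSet Ω) (hΩb : Bornology.IsBounded Ω)
    (hΩpos : 0 < volume Ω)
    (α q N M n m : ℝ)
    (hα0 : 0 < α) (hα1 : α ≤ 1) (hN : 0 < N) (hM0 : 0 ≤ M) (hMN : M ≤ N)
    (hn : n = N / (volume Ω).toReal) (hm : m = M / (volume Ω).toReal)
    (hq : q < -n + Real.sqrt (n ^ 2 + α * m ^ 2))
    (ustar : Fin 3 → ℝ)
    (hustar : ustar = ![Real.sqrt ((n + m) / 2), 0, Real.sqrt ((n - m) / 2)]) :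
    IsMinimizer Ω α q N M (fun _ => ustar) ∧
      ∀ u : E3 → Fin 3 → ℝ, IsMinimizer Ω α q N M u →
        ∀ᵐ x ∂(volume.restrict Ω), u x = ustar := by
  have hfin : volume Ω < ⊤ := hΩb.measure_lt_top
  haveI : IsFiniteMeasure (volume.restrict Ω) :=
    ⟨by rwa [Measure.restrict_apply_univ]⟩
  set T := (volume Ω).toReal with hT_def
  have hT : 0 < T := ENNReal.toReal_pos hΩpos.ne' hfin.ne
  have hNn : N = n * T := by rw [hn]; field_simp
  have hMm : M = m * T := by rw [hm]; field_simp
  have hn0 : 0 < n := by rw [hn]; positivity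
  have hm0 : 0 ≤ m := by rw [hm]; positivity
  have hmn : m ≤ n := by
    rw [hm, hn]; gcongr
  have hq' : q + n < Real.sqrt (n ^ 2 + α * m ^ 2) := by linarith
  -- ustar facts
  have e0 : ustar 0 = Real.sqrt ((n + m) / 2) := by rw [hustar]; rfl
  have e1 : ustar 1 = 0 := by rw [hustar]; rfl
  have e2 : ustar 2 = Real.sqrt ((n - m) / 2) := by rw [hustar]; rfl
  have s0 : ustar 0 ^ 2 = (n + m) / 2 := by
    rw [e0]; exact Real.sq_sqrt (by linarith)
  have s2 : ustar 2 ^ 2 = (n - m) / 2 := by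
    rw [e2]; exact Real.sq_sqrt (by linarith)
  have hstar_nonneg : ∀ i, 0 ≤ ustar i := by
    intro i; fin_cases i <;> simp [hustar] <;> positivity
  have hHstar : HTF α q ustar = n ^ 2 / 2 + α * m ^ 2 / 2 + q * n := by
    simp only [HTF, sgn', if_pos hα0.le, e1]
    rw [s0, s2]; ring
  -- continuity
  have hContHTF : Continuous (fun v : Fin 3 → ℝ => HTF α q v) := by
    unfold HTF; fun_prop
  have hContRho : Continuous (fun v : Fin 3 → ℝ => v 0 ^ 2 + v 1 ^ 2 + v 2 ^ 2) := by fun_prop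
  have hContEta : Continuous (fun v : Fin 3 → ℝ => v 0 ^ 2 - v 2 ^ 2) := by fun_prop
  -- admissibility of the constant candidate
  have hAdm : Admissible Ω N M (fun _ => ustar) := by
    refine ⟨memLp_const ustar, ae_of_all _ (fun x => hstar_nonneg), ?_, ?_⟩
    · rw [setIntegral_const, smul_eq_mul, measureReal_def, e1, s0, s2, hNn]; ring
    · rw [setIntegral_const, smul_eq_mul, measureReal_def, s0, s2, hMm]; ring
  have hEstar : ∫ x in Ω, HTF α q ((fun _ => ustar) x)
      = T * (n ^ 2 / 2 + α * m ^ 2 / 2 + q * n) := by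
    simp only
    rw [setIntegral_const, smul_eq_mul, measureReal_def, hHstar]
  -- integrability and key identity for any admissible u
  have hig : ∀ u : E3 → Fin 3 → ℝ, Admissible Ω N M u →
      Integrable (fun x => HTF α q (u x) + (n ^ 2 / 2 + α * m ^ 2 / 2)
        - (n + q) * (u x 0 ^ 2 + u x 1 ^ 2 + u x 2 ^ 2)
        - α * m * (u x 0 ^ 2 - u x 2 ^ 2)) (volume.restrict Ω) := by
    intro u hu
    have hIH := integrable_comp4 hu.memL4 _ hContHTF _ (abs_HTF_le α q hα0.le hα1)
    have hIR := integrable_comp4 hu.memL4 _ hContRho _ abs_rho_le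
    have hIE := integrable_comp4 hu.memL4 _ hContEta _ abs_eta_le
    exact ((hIH.add (integrable_const _)).sub (hIR.const_mul _)).sub (hIE.const_mul _)
  have main : ∀ u : E3 → Fin 3 → ℝ, Admissible Ω N M u →
      ∫ x in Ω, HTF α q (u x)
        = T * (n ^ 2 / 2 + α * m ^ 2 / 2 + q * n)
          + ∫ x in Ω, (HTF α q (u x) + (n ^ 2 / 2 + α * m ^ 2 / 2)
              - (n + q) * (u x 0 ^ 2 + u x 1 ^ 2 + u x 2 ^ 2)
              - α * m * (u x 0 ^ 2 - u x 2 ^ 2)) := by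
    intro u hu
    have hIH := integrable_comp4 hu.memL4 _ hContHTF _ (abs_HTF_le α q hα0.le hα1)
    have hIR := integrable_comp4 hu.memL4 _ hContRho _ abs_rho_le
    have hIE := integrable_comp4 hu.memL4 _ hContEta _ abs_eta_le
    have L1 : Integrable (fun x => HTF α q (u x) + (n ^ 2 / 2 + α * m ^ 2 / 2))
        (volume.restrict Ω) := hIH.add (integrable_const _)
    have L2 : Integrable (fun x => HTF α q (u x) + (n ^ 2 / 2 + α * m ^ 2 / 2)
        - (n + q) * (u x 0 ^ 2 + u x 1 ^ 2 + u x 2 ^ 2)) (volume.restrict Ω) :=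
      L1.sub (hIR.const_mul (n + q))
    have E1 : ∫ x in Ω, (HTF α q (u x) + (n ^ 2 / 2 + α * m ^ 2 / 2))
        = (∫ x in Ω, HTF α q (u x)) + T * (n ^ 2 / 2 + α * m ^ 2 / 2) := by
      rw [integral_add hIH (integrable_const _), setIntegral_const, smul_eq_mul, measureReal_def]
    have E2 : ∫ x in Ω, (HTF α q (u x) + (n ^ 2 / 2 + α * m ^ 2 / 2)
          - (n + q) * (u x 0 ^ 2 + u x 1 ^ 2 + u x 2 ^ 2))
        = (∫ x in Ω, HTF α q (u x)) + T * (n ^ 2 / 2 + α * m ^ 2 / 2) - (n + q) * N := by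
      rw [integral_sub L1 (hIR.const_mul (n + q)), E1, integral_const_mul, hu.mass]
    have E3 : ∫ x in Ω, (HTF α q (u x) + (n ^ 2 / 2 + α * m ^ 2 / 2)
          - (n + q) * (u x 0 ^ 2 + u x 1 ^ 2 + u x 2 ^ 2)
          - α * m * (u x 0 ^ 2 - u x 2 ^ 2))
        = (∫ x in Ω, HTF α q (u x)) + T * (n ^ 2 / 2 + α * m ^ 2 / 2)
          - (n + q) * N - α * m * M := by
      rw [integral_sub L2 (hIE.const_mul (α * m)), E2, integral_const_mul, hu.mag]
    rw [E3, hNn, hMm]; ring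
  have gnonneg : ∀ u : E3 → Fin 3 → ℝ, Admissible Ω N M u →
      0 ≤ ∫ x in Ω, (HTF α q (u x) + (n ^ 2 / 2 + α * m ^ 2 / 2)
          - (n + q) * (u x 0 ^ 2 + u x 1 ^ 2 + u x 2 ^ 2)
          - α * m * (u x 0 ^ 2 - u x 2 ^ 2)) := by
    intro u hu
    apply integral_nonneg_of_ae
    filter_upwards [hu.nonneg] with x hx
    exact (pointwise_key α q n m hα0 hn0 hm0 hq' (u x) (hx 0) (hx 1) (hx 2)).1
  constructor
  · refine ⟨hAdm, ?_⟩
    intro v hv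
    rw [hEstar, main v hv]
    have := gnonneg v hv
    linarith
  · intro u hu
    obtain ⟨huA, humin⟩ := hu
    have h1 : ∫ x in Ω, HTF α q (u x) ≤ T * (n ^ 2 / 2 + α * m ^ 2 / 2 + q * n) := by
      have := humin (fun _ => ustar) hAdm
      rwa [hEstar] at this
    have h2 := main u huA
    have h3 : 0 ≤ᵐ[volume.restrict Ω] fun x => (HTF α q (u x) + (n ^ 2 / 2 + α * m ^ 2 / 2)
          - (n + q) * (u x 0 ^ 2 + u x 1 ^ 2 + u x 2 ^ 2)
          - α * m * (u x 0 ^ 2 - u x 2 ^ 2)) := by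
      filter_upwards [huA.nonneg] with x hx
      exact (pointwise_key α q n m hα0 hn0 hm0 hq' (u x) (hx 0) (hx 1) (hx 2)).1
    have h4 : ∫ x in Ω, (HTF α q (u x) + (n ^ 2 / 2 + α * m ^ 2 / 2)
          - (n + q) * (u x 0 ^ 2 + u x 1 ^ 2 + u x 2 ^ 2)
          - α * m * (u x 0 ^ 2 - u x 2 ^ 2)) = 0 := by
      have h5 := integral_nonneg_of_ae h3
      linarith
    have h6 := (integral_eq_zero_iff_of_nonneg_ae h3 (hig u huA)).mp h4
    filter_upwards [h6, huA.nonneg] with x hgx hx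
    have hgx' : HTF α q (u x) + (n ^ 2 / 2 + α * m ^ 2 / 2)
        - (n + q) * (u x 0 ^ 2 + u x 1 ^ 2 + u x 2 ^ 2)
        - α * m * (u x 0 ^ 2 - u x 2 ^ 2) = 0 := by simpa using hgx
    obtain ⟨c0, c1, c2⟩ :=
      (pointwise_key α q n m hα0 hn0 hm0 hq' (u x) (hx 0) (hx 1) (hx 2)).2 hgx'
    funext i
    fin_cases i <;> simp [hustar, c0, c1, c2]
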